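/- Two functions holomorphic on the strip S = {z ∈ ℂ : 0 < Re z < 1} are identical if their difference is bounded on S and they coincide along the sequence α_k = 1/k, k ≥ 2. -/

import Mathlib

open Complex Set Metric Filter Function
open scoped Topology Real

noncomputable def Bf (u w : ℂ) : ℂ := (w - u) / (1 - (starRingEnd ℂ) u * w)

lemma one_sub_conj_mul_ne_zero {u w : ℂ} (hu : ‖u‖ < 1) (hw : ‖w‖ ≤ 1) :
    (1 : ℂ) - (starRingEnd ℂ) u * w ≠ 0 := by
  intro h
  have h1 : (1 : ℂ) = (starRingEnd ℂ) u * w := by linear_combination h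
  have : (1:ℝ) < 1 := by
    calc (1:ℝ) = ‖(1:ℂ)‖ := by simp
    _ = ‖(starRingEnd ℂ) u * w‖ := by rw [h1]
    _ ≤ ‖u‖ * ‖w‖ := by rw [norm_mul, RCLike.norm_conj]
    _ < 1 := by nlinarith [norm_nonneg u, norm_nonneg w]
  exact absurd this (lt_irrefl _)

lemma key_identity (u z : ℂ) :
    ‖z - u‖^2 = ‖1 - (starRingEnd ℂ) u * z‖^2 - (1 - ‖z‖^2) * (1 - ‖u‖^2) := by
  have h1 : ‖z - u‖^2 = Complex.normSq (z - u) := by rw [← Complex.sq_norm]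
  have h2 : ‖1 - (starRingEnd ℂ) u * z‖^2 = Complex.normSq (1 - (starRingEnd ℂ) u * z) := by
    rw [← Complex.sq_norm]
  have h3 : ‖z‖^2 = Complex.normSq z := by rw [← Complex.sq_norm]
  have h4 : ‖u‖^2 = Complex.normSq u := by rw [← Complex.sq_norm]
  rw [h1, h2, h3, h4]
  simp only [Complex.normSq_apply, Complex.sub_re, Complex.sub_im, Complex.mul_re,
    Complex.mul_im, Complex.one_re, Complex.one_im, Complex.conj_re, Complex.conj_im]
  ring

lemma boundary_est {u z : ℂ} {r : ℝ} (hu : ‖u‖ < r) (hz : ‖z‖ = r) (hr : r ≤ 1) :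
    ‖1 - (starRingEnd ℂ) u * z‖ * (r - ‖u‖) ≤ (1 - ‖u‖ * r) * ‖z - u‖ := by
  set a := ‖1 - (starRingEnd ℂ) u * z‖ with ha
  set b := ‖z - u‖ with hb
  have hkey : b^2 = a^2 - (1 - r^2) * (1 - ‖u‖^2) := by rw [ha, hb, key_identity, hz]
  have hu0 : 0 ≤ ‖u‖ := norm_nonneg _
  have hr0 : 0 < r := lt_of_le_of_lt hu0 hu
  have haL : 1 - ‖u‖ * r ≤ a := by
    have : ‖(starRingEnd ℂ) u * z‖ = ‖u‖ * r := by rw [norm_mul, RCLike.norm_conj, hz]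
    calc 1 - ‖u‖ * r = ‖(1:ℂ)‖ - ‖(starRingEnd ℂ) u * z‖ := by rw [this]; simp
    _ ≤ a := norm_sub_norm_le _ _
  have hb0 : 0 ≤ b := norm_nonneg _
  have ha0 : 0 ≤ a := norm_nonneg _
  have h1r : (0:ℝ) ≤ 1 - r^2 := by nlinarith
  have h1u : (0:ℝ) ≤ 1 - ‖u‖^2 := by nlinarith
  have hA : (0:ℝ) ≤ a^2 - (1 - ‖u‖*r)^2 := by nlinarith
  have hprod : (0:ℝ) ≤ (1 - r^2) * (1 - ‖u‖^2) * (a^2 - (1 - ‖u‖*r)^2) :=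
    mul_nonneg (mul_nonneg h1r h1u) hA
  have hsq : (a * (r - ‖u‖))^2 ≤ ((1 - ‖u‖ * r) * b)^2 := by
    have expand : ((1 - ‖u‖*r)*b)^2 - (a*(r - ‖u‖))^2
        = (1 - r^2) * (1 - ‖u‖^2) * (a^2 - (1 - ‖u‖*r)^2) := by
      rw [mul_pow, mul_pow, hkey]; ring
    linarith [expand, hprod]
  have h1 : 0 ≤ a * (r - ‖u‖) := mul_nonneg ha0 (by linarith)
  have h2 : 0 ≤ (1 - ‖u‖ * r) * b := mul_nonneg (by nlinarith) hb0
  nlinarith [hsq, h1, h2]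

lemma factor_out {H : ℂ → ℂ} {C : ℝ} (hd : DifferentiableOn ℂ H (ball 0 1))
    (hb : ∀ w ∈ ball (0:ℂ) 1, ‖H w‖ ≤ C) {u : ℂ} (hu : u ∈ ball (0:ℂ) 1) (hH0 : H u = 0) :
    ∃ H₁ : ℂ → ℂ, DifferentiableOn ℂ H₁ (ball 0 1) ∧ (∀ w ∈ ball (0:ℂ) 1, ‖H₁ w‖ ≤ C)
      ∧ ∀ w ∈ ball (0:ℂ) 1, H w = H₁ w * Bf u w := by
  have hu1 : ‖u‖ < 1 := by simpa using mem_ball_zero_iff.mp hu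
  have hdsl : DifferentiableOn ℂ (dslope H u) (ball 0 1) :=
    (differentiableOn_dslope (isOpen_ball.mem_nhds hu)).mpr hd
  have hd1 : DifferentiableOn ℂ (fun w => (1 - (starRingEnd ℂ) u * w) * dslope H u w)
      (ball 0 1) := by
    apply DifferentiableOn.mul _ hdsl
    exact (differentiable_const _ |>.sub ((differentiable_id).const_mul _)).differentiableOn
  refine ⟨fun w => (1 - (starRingEnd ℂ) u * w) * dslope H u w, hd1, ?_, ?_⟩
  · intro w hw
    have hw1 : ‖w‖ < 1 := by simpa using mem_ball_zero_iff.mp hw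
    have hC0 : 0 ≤ C := le_trans (norm_nonneg _) (hb u hu)
    set m := max ‖w‖ ‖u‖ with hm
    have hm1 : m < 1 := max_lt hw1 hu1
    have hm0 : 0 ≤ m := le_trans (norm_nonneg w) (le_max_left _ _)
    suffices hsuff : ∀ᶠ r in 𝓝[<] (1:ℝ),
        ‖(1 - (starRingEnd ℂ) u * w) * dslope H u w‖ ≤ C * ((1 - ‖u‖ * r) / (r - ‖u‖)) by
      have hlim : Tendsto (fun r : ℝ => C * ((1 - ‖u‖ * r) / (r - ‖u‖))) (𝓝[<] (1:ℝ))
          (𝓝 (C * ((1 - ‖u‖ * 1) / (1 - ‖u‖)))) := by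
        apply Tendsto.mono_left _ nhdsWithin_le_nhds
        apply Tendsto.const_mul
        apply Tendsto.div
        · exact tendsto_const_nhds.sub (tendsto_id.const_mul _)
        · exact tendsto_id.sub tendsto_const_nhds
        · exact sub_ne_zero.mpr (by linarith : (1:ℝ) ≠ ‖u‖)
      have h2 := ge_of_tendsto hlim hsuff
      rw [mul_one, div_self (show (1:ℝ) - ‖u‖ ≠ 0 by linarith), mul_one] at h2
      exact h2
    filter_upwards [Ioo_mem_nhdsLT_of_mem (⟨hm1, le_rfl⟩ : (1:ℝ) ∈ Ioc m 1)] with r hr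
    have hur : ‖u‖ < r := lt_of_le_of_lt (le_max_right _ _) hr.1
    have hwr : ‖w‖ < r := lt_of_le_of_lt (le_max_left _ _) hr.1
    have hr0 : 0 < r := lt_of_le_of_lt (norm_nonneg u) hur
    have hr1 : r < 1 := hr.2
    have hdc : DiffContOnCl ℂ (fun w => (1 - (starRingEnd ℂ) u * w) * dslope H u w)
        (ball 0 r) := by
      apply DifferentiableOn.diffContOnCl
      rw [closure_ball (0:ℂ) hr0.ne']
      exact hd1.mono (closedBall_subset_ball hr1)
    refine norm_le_of_forall_mem_frontier_norm_le isBounded_ball hdc ?_ ?_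
    · rw [frontier_ball (0:ℂ) hr0.ne']
      intro z hz
      have hzr : ‖z‖ = r := by simpa using mem_sphere_zero_iff_norm.mp hz
      have hz1 : z ∈ ball (0:ℂ) 1 := mem_ball_zero_iff.mpr (by rw [hzr]; exact hr1)
      have hzu : z ≠ u := fun h => by rw [h] at hzr; exact absurd hzr (ne_of_lt hur)
      have hds : dslope H u z = H z / (z - u) := by
        rw [dslope_of_ne _ hzu, slope_def_field, hH0, sub_zero]
      rw [hds, norm_mul, norm_div]
      have hzu0 : 0 < ‖z - u‖ := norm_pos_iff.mpr (sub_ne_zero.mpr hzu)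
      have hbz := hb z hz1
      have hkey := boundary_est hur hzr hr1.le
      have hru : 0 < r - ‖u‖ := by linarith
      have h1ur : 0 < 1 - ‖u‖ * r := by nlinarith [norm_nonneg u]
      calc ‖1 - (starRingEnd ℂ) u * z‖ * (‖H z‖ / ‖z - u‖)
          ≤ ‖1 - (starRingEnd ℂ) u * z‖ * (C / ‖z - u‖) := by
            exact mul_le_mul_of_nonneg_left ((div_le_div_iff_of_pos_right hzu0).mpr hbz) (norm_nonneg _)
        _ ≤ C * ((1 - ‖u‖ * r) / (r - ‖u‖)) := by
            rw [show ‖1 - (starRingEnd ℂ) u * z‖ * (C / ‖z - u‖)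
                = (‖1 - (starRingEnd ℂ) u * z‖ * C) / ‖z - u‖ by ring,
              show C * ((1 - ‖u‖ * r) / (r - ‖u‖)) = (C * (1 - ‖u‖ * r)) / (r - ‖u‖) by ring,
              div_le_div_iff₀ hzu0 hru]
            nlinarith [mul_le_mul_of_nonneg_left hkey hC0]
    · rw [closure_ball (0:ℂ) hr0.ne']
      exact mem_closedBall_zero_iff.mpr hwr.le
  · intro w hw
    have hw1 : ‖w‖ < 1 := by simpa using mem_ball_zero_iff.mp hw
    have h1 : (1 : ℂ) - (starRingEnd ℂ) u * w ≠ 0 := one_sub_conj_mul_ne_zero hu1 hw1.le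
    rcases eq_or_ne w u with rfl | hne
    · simp [Bf, hH0]
    · show H w = (1 - (starRingEnd ℂ) u * w) * dslope H u w * Bf u w
      rw [dslope_of_ne _ hne, slope_def_field, hH0, sub_zero, Bf]
      field_simp [sub_ne_zero.mpr hne, h1]

lemma iter_bound {H : ℂ → ℂ} {C : ℝ} (hd : DifferentiableOn ℂ H (ball 0 1))
    (hb : ∀ w ∈ ball (0:ℂ) 1, ‖H w‖ ≤ C) (u : ℕ → ℂ) (hu : ∀ k, u k ∈ ball (0:ℂ) 1)
    (huinj : Function.Injective u) (hz : ∀ k, H (u k) = 0) (n : ℕ) :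
    ∀ w ∈ ball (0:ℂ) 1, ‖H w‖ ≤ C * ∏ k ∈ Finset.range n, ‖Bf (u k) w‖ := by
  suffices h : ∃ Hn : ℂ → ℂ, DifferentiableOn ℂ Hn (ball 0 1)
      ∧ (∀ w ∈ ball (0:ℂ) 1, ‖Hn w‖ ≤ C)
      ∧ ∀ w ∈ ball (0:ℂ) 1, H w = Hn w * ∏ k ∈ Finset.range n, Bf (u k) w by
    obtain ⟨Hn, _, hbn, hfac⟩ := h
    intro w hw
    rw [hfac w hw, norm_mul, norm_prod]
    exact mul_le_mul_of_nonneg_right (hbn w hw)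
      (Finset.prod_nonneg fun _ _ => norm_nonneg _)
  induction n with
  | zero => exact ⟨H, hd, hb, by simp⟩
  | succ n ih =>
    obtain ⟨Hn, hdn, hbn, hfac⟩ := ih
    have hun1 : ‖u n‖ < 1 := mem_ball_zero_iff.mp (hu n)
    have hzn : Hn (u n) = 0 := by
      have h0 := hfac (u n) (hu n)
      rw [hz n] at h0
      have hprod : ∏ k ∈ Finset.range n, Bf (u k) (u n) ≠ 0 := by
        apply Finset.prod_ne_zero_iff.mpr
        intro k hk
        have hk' : u k ≠ u n := fun h => absurd (huinj h) (Finset.mem_range.1 hk).ne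
        exact div_ne_zero (sub_ne_zero.2 (Ne.symm hk'))
          (one_sub_conj_mul_ne_zero (mem_ball_zero_iff.mp (hu k)) hun1.le)
      exact (mul_eq_zero.mp h0.symm).resolve_right hprod
    obtain ⟨H', hd', hb', hfac'⟩ := factor_out hdn hbn (hu n) hzn
    refine ⟨H', hd', hb', fun w hw => ?_⟩
    rw [hfac w hw, hfac' w hw, Finset.prod_range_succ]
    ring

lemma Bf_norm_le {u w : ℂ} (hu : ‖u‖ < 1) (hw : ‖w‖ < 1) :
    ‖Bf u w‖ ≤ Real.exp (-((1 - ‖w‖^2) * (1 - ‖u‖^2) / 8)) := by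
  have hne := one_sub_conj_mul_ne_zero hu hw.le
  set a := ‖(1:ℂ) - (starRingEnd ℂ) u * w‖ with ha
  set b := ‖w - u‖ with hb
  have hkey : b^2 = a^2 - (1 - ‖w‖^2) * (1 - ‖u‖^2) := key_identity u w
  have ha0 : 0 < a := norm_pos_iff.mpr hne
  have ha2 : a ≤ 2 := by
    calc a ≤ ‖(1:ℂ)‖ + ‖(starRingEnd ℂ) u * w‖ := norm_sub_le _ _
    _ ≤ 2 := by
        rw [norm_mul, RCLike.norm_conj, norm_one]
        nlinarith [norm_nonneg u, norm_nonneg w]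
  set D := (1 - ‖w‖^2) * (1 - ‖u‖^2) with hD
  have hD0 : 0 < D := by
    apply mul_pos <;> nlinarith [norm_nonneg u, norm_nonneg w]
  have hBnorm : ‖Bf u w‖ = b / a := by rw [Bf, norm_div]
  have hb0 : 0 ≤ b := norm_nonneg _
  have hsq : (b / a)^2 ≤ (Real.exp (-(D / 8)))^2 := by
    have h1 : (b/a)^2 = 1 - D / a^2 := by
      rw [div_pow, hkey]
      field_simp
    have h2 : 1 - D / a^2 ≤ 1 - D / 4 := by
      have : D / a^2 ≥ D / 4 := by
        apply div_le_div_of_nonneg_left hD0.le (by positivity)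
        nlinarith
      linarith
    have h3 : (Real.exp (-(D/8)))^2 = Real.exp (-(D/4)) := by
      rw [← Real.exp_nat_mul]
      norm_num
      ring
    have h4 : 1 - D/4 ≤ Real.exp (-(D/4)) := by
      have := Real.add_one_le_exp (-(D/4))
      linarith
    rw [h3]; linarith
  rw [hBnorm]
  have := Real.sqrt_le_sqrt hsq
  rwa [Real.sqrt_sq (by positivity), Real.sqrt_sq (Real.exp_pos _).le] at this

noncomputable def toDisc (z : ℂ) : ℂ :=
  (Complex.exp (π * I * z) - I) / (Complex.exp (π * I * z) + I)
noncomputable def toStrip (u : ℂ) : ℂ :=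
  Complex.log (I * (1 + u) / (1 - u)) / (π * I)

lemma im_pi_I_mul (z : ℂ) : (π * I * z).im = π * z.re := by
  simp [Complex.mul_im, Complex.mul_re]

lemma exp_im_pos {z : ℂ} (hz : 0 < z.re ∧ z.re < 1) : 0 < (Complex.exp (π * I * z)).im := by
  rw [Complex.exp_im, im_pi_I_mul]
  apply mul_pos (Real.exp_pos _)
  apply Real.sin_pos_of_pos_of_lt_pi
  · exact mul_pos Real.pi_pos hz.1
  · nlinarith [Real.pi_pos, hz.2]

lemma denom_ne_zero {E : ℂ} (hE : 0 < E.im) : E + I ≠ 0 := by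
  intro h
  have : (E + I).im = E.im + 1 := by simp
  rw [h] at this
  simp at this
  linarith

lemma toDisc_mem_ball {z : ℂ} (hz : 0 < z.re ∧ z.re < 1) : toDisc z ∈ ball (0:ℂ) 1 := by
  set E := Complex.exp (π * I * z) with hE
  have him : 0 < E.im := exp_im_pos hz
  have hne : E + I ≠ 0 := denom_ne_zero him
  rw [mem_ball_zero_iff, toDisc, norm_div, div_lt_one (norm_pos_iff.mpr hne)]
  have h1 : Complex.normSq (E - I) < Complex.normSq (E + I) := by
    simp only [Complex.normSq_apply, Complex.sub_re, Complex.sub_im, Complex.add_re,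
      Complex.add_im, Complex.I_re, Complex.I_im]
    nlinarith
  calc ‖E - I‖ = Real.sqrt (Complex.normSq (E - I)) := by
        rw [Complex.norm_def]
    _ < Real.sqrt (Complex.normSq (E + I)) := by
        exact Real.sqrt_lt_sqrt (Complex.normSq_nonneg _) h1
    _ = ‖E + I‖ := by rw [Complex.norm_def]

lemma toStrip_toDisc {z : ℂ} (hz : 0 < z.re ∧ z.re < 1) : toStrip (toDisc z) = z := by
  set E := Complex.exp (π * I * z) with hE
  have him : 0 < E.im := exp_im_pos hz
  have hne : E + I ≠ 0 := denom_ne_zero him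
  have h1 : (1:ℂ) - toDisc z = 2 * I / (E + I) := by
    rw [toDisc, ← hE]
    field_simp
    ring
  have h1ne : (1:ℂ) - toDisc z ≠ 0 := by
    rw [h1]
    exact div_ne_zero (by norm_num [Complex.I_ne_zero]) hne
  have h2 : I * (1 + toDisc z) / (1 - toDisc z) = E := by
    rw [toDisc, ← hE] at h1ne ⊢
    rw [div_eq_iff h1ne]
    field_simp
    ring
  rw [toStrip, h2, hE, Complex.log_exp, mul_comm, mul_div_assoc, div_self, mul_one]
  · exact mul_ne_zero (Complex.ofReal_ne_zero.mpr Real.pi_ne_zero) Complex.I_ne_zero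
  · rw [im_pi_I_mul]
    nlinarith [Real.pi_pos, hz.1]
  · rw [im_pi_I_mul]
    nlinarith [Real.pi_pos, hz.2]

lemma div_pi_I_re (x : ℂ) : (x / (π * I)).re = x.im / π := by
  rw [div_eq_mul_inv]
  have : ((π:ℂ) * I)⁻¹ = -I / π := by
    field_simp [Complex.I_ne_zero, Complex.ofReal_ne_zero.mpr Real.pi_ne_zero]
    simp [Complex.ext_iff]
  rw [this]
  simp [Complex.mul_re, Complex.div_re, Complex.normSq_apply]
  field_simp

lemma w_im_pos {u : ℂ} (hu : u ∈ ball (0:ℂ) 1) : 0 < (I * (1 + u) / (1 - u)).im := by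
  have hu1 : ‖u‖ < 1 := mem_ball_zero_iff.mp hu
  have hne : (1:ℂ) - u ≠ 0 := by
    intro h
    have : (1:ℂ) = u := by linear_combination h
    rw [← this] at hu1; simp at hu1
  have hnsq : 0 < Complex.normSq (1 - u) := Complex.normSq_pos.mpr hne
  rw [Complex.div_im]
  have habs : Complex.normSq u < 1 := by
    rw [← Complex.sq_norm]
    nlinarith [norm_nonneg u, hu1]
  have hnum : (I * (1 + u)).im * (1 - u).re - (I * (1 + u)).re * (1 - u).im
      = 1 - Complex.normSq u := by
    simp [Complex.mul_im, Complex.mul_re, Complex.normSq_apply]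
    ring
  rw [div_sub_div_same, hnum]
  exact div_pos (by linarith) hnsq

lemma toStrip_mem_strip {u : ℂ} (hu : u ∈ ball (0:ℂ) 1) :
    0 < (toStrip u).re ∧ (toStrip u).re < 1 := by
  set w := I * (1 + u) / (1 - u) with hw
  have him : 0 < w.im := w_im_pos hu
  have hwne : w ≠ 0 := fun h => by rw [h] at him; simp at him
  rw [toStrip, div_pi_I_re, Complex.log_im]
  constructor
  · apply div_pos _ Real.pi_pos
    rcases lt_or_eq_of_le (Complex.arg_nonneg_iff.mpr him.le) with h | h
    · exact h
    · exfalso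
      have := Complex.arg_eq_zero_iff.mp h.symm
      linarith [this.2, him]
  · rw [div_lt_one Real.pi_pos]
    rcases lt_or_eq_of_le (Complex.arg_le_pi w) with h | h
    · exact h
    · exfalso
      have := Complex.arg_eq_pi_iff.mp h
      linarith [this.2, him]

lemma toStrip_differentiableOn : DifferentiableOn ℂ toStrip (ball (0:ℂ) 1) := by
  intro u hu
  apply DifferentiableAt.differentiableWithinAt
  have hu1 : ‖u‖ < 1 := mem_ball_zero_iff.mp hu
  have hne : (1:ℂ) - u ≠ 0 := by
    intro h
    have : (1:ℂ) = u := by linear_combination h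
    rw [← this] at hu1; simp at hu1
  have him : 0 < (I * (1 + u) / (1 - u)).im := w_im_pos hu
  have hdiff : DifferentiableAt ℂ (fun v => I * (1 + v) / (1 - v)) u := by
    apply DifferentiableAt.div
    · exact (differentiable_const _).differentiableAt.mul
        ((differentiable_const _).add differentiable_id).differentiableAt
    · exact ((differentiable_const _).sub differentiable_id).differentiableAt
    · exact hne
  apply DifferentiableAt.div_const
  exact (Complex.differentiableAt_log (Or.inr him.ne')).comp u hdiff

lemma alpha_mem_strip (k : ℕ) :
    0 < (((k:ℂ) + 2)⁻¹).re ∧ (((k:ℂ) + 2)⁻¹).re < 1 := by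
  have h : ((k:ℂ) + 2)⁻¹ = ((((k:ℝ) + 2)⁻¹ : ℝ) : ℂ) := by push_cast; ring
  rw [h, Complex.ofReal_re]
  have hk : (0:ℝ) < (k:ℝ) + 2 := by positivity
  constructor
  · positivity
  · rw [inv_lt_one_iff₀]
    right; linarith

lemma toDisc_alpha_est (k : ℕ) :
    2 / ((k:ℝ) + 2) ≤ 1 - ‖toDisc (((k:ℂ) + 2)⁻¹)‖^2 := by
  set t : ℝ := ((k:ℝ) + 2)⁻¹ with ht
  have htpos : 0 < t := by positivity
  have hthalf : t ≤ 1/2 := by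
    rw [ht]
    rw [inv_le_comm₀ (by positivity) (by norm_num)]
    push_cast; linarith [Nat.cast_nonneg (α := ℝ) k]
  set x := π * t with hx
  have hx0 : 0 ≤ x := by positivity
  have hx2 : x ≤ π / 2 := by
    rw [hx]
    nlinarith [Real.pi_pos]
  have hsin_ge : 2 * t ≤ Real.sin x := by
    have h := Real.mul_le_sin hx0 hx2
    have h2 : 2 / π * x = 2 * t := by
      rw [hx]; field_simp
    linarith [h2 ▸ h]
  have hsin0 : 0 ≤ Real.sin x := by
    apply Real.sin_nonneg_of_nonneg_of_le_pi hx0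
    linarith [Real.pi_pos]
  have hsin1 : Real.sin x ≤ 1 := Real.sin_le_one x
  have harg : (π : ℂ) * I * (((k:ℂ) + 2)⁻¹) = ((x:ℝ) : ℂ) * I := by
    rw [hx, ht]
    push_cast
    ring
  set E := Complex.exp ((π : ℂ) * I * (((k:ℂ) + 2)⁻¹)) with hE
  have hEre : E.re = Real.cos x := by rw [hE, harg, Complex.exp_ofReal_mul_I_re]
  have hEim : E.im = Real.sin x := by rw [hE, harg, Complex.exp_ofReal_mul_I_im]
  have hpyth := Real.sin_sq_add_cos_sq x
  have hn1 : Complex.normSq (E - I) = 2 - 2 * Real.sin x := by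
    simp only [Complex.normSq_apply, Complex.sub_re, Complex.sub_im, Complex.I_re,
      Complex.I_im, hEre, hEim]
    nlinarith [hpyth]
  have hn2 : Complex.normSq (E + I) = 2 + 2 * Real.sin x := by
    simp only [Complex.normSq_apply, Complex.add_re, Complex.add_im, Complex.I_re,
      Complex.I_im, hEre, hEim]
    nlinarith [hpyth]
  have hnorm2 : ‖toDisc (((k:ℂ) + 2)⁻¹)‖^2 = (2 - 2*Real.sin x) / (2 + 2*Real.sin x) := by
    rw [toDisc, ← hE, norm_div, div_pow,
      Complex.sq_norm, Complex.sq_norm, hn1, hn2]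
  rw [hnorm2]
  have h2t : 2 / ((k:ℝ) + 2) = 2 * t := by rw [ht]; field_simp
  rw [h2t]
  have hden : 0 < 2 + 2 * Real.sin x := by linarith
  rw [← sub_nonneg]
  have heq : 1 - (2 - 2 * Real.sin x) / (2 + 2 * Real.sin x) - 2 * t
      = (4 * Real.sin x - 2 * t * (2 + 2 * Real.sin x)) / (2 + 2 * Real.sin x) := by
    field_simp
    ring
  rw [heq]
  apply div_nonneg _ hden.le
  nlinarith [hsin_ge, hsin1, hsin0, htpos]

lemma harmonic_shift_tendsto :
    Tendsto (fun n => ∑ k ∈ Finset.range n, 1 / ((k:ℝ) + 2)) atTop atTop := by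
  have hT2 : Tendsto (fun n => (∑ i ∈ Finset.range n, (1 / (i + 1) : ℝ)) / 2) atTop atTop :=
    Tendsto.atTop_div_const (by norm_num) Real.tendsto_sum_range_one_div_nat_succ_atTop
  refine tendsto_atTop_mono (fun n => ?_) hT2
  rw [Finset.sum_div]
  apply Finset.sum_le_sum
  intro k _
  rw [div_div]
  apply one_div_le_one_div_of_le (by positivity)
  linarith [Nat.cast_nonneg (α := ℝ) k]

/-- Blaschke's theorem on the strip `S = {z : 0 < Re z < 1}`: two holomorphic
functions on `S` whose difference is bounded and which coincide along the sequence
`1/k`, `k ≥ 2`, are identical on `S`. -/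
theorem blaschke_strip (f g : ℂ → ℂ)
    (hf : DifferentiableOn ℂ f {z : ℂ | 0 < z.re ∧ z.re < 1})
    (hg : DifferentiableOn ℂ g {z : ℂ | 0 < z.re ∧ z.re < 1})
    (C : ℝ) (hbd : ∀ z ∈ {z : ℂ | 0 < z.re ∧ z.re < 1}, ‖f z - g z‖ ≤ C)
    (heq : ∀ k : ℕ, 2 ≤ k → f ((k : ℂ))⁻¹ = g ((k : ℂ))⁻¹) :
    EqOn f g {z : ℂ | 0 < z.re ∧ z.re < 1} := by
  intro z hz
  simp only [mem_setOf_eq] at hz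
  -- the pulled-back difference on the unit disc
  set H : ℂ → ℂ := fun u => f (toStrip u) - g (toStrip u) with hH
  have hmapsTo : MapsTo toStrip (ball (0:ℂ) 1) {z : ℂ | 0 < z.re ∧ z.re < 1} :=
    fun u hu => toStrip_mem_strip hu
  have hdH : DifferentiableOn ℂ H (ball 0 1) :=
    (hf.comp toStrip_differentiableOn hmapsTo).sub (hg.comp toStrip_differentiableOn hmapsTo)
  have hbH : ∀ w ∈ ball (0:ℂ) 1, ‖H w‖ ≤ C := fun w hw => hbd _ (hmapsTo hw)
  set U : ℕ → ℂ := fun k => toDisc (((k:ℂ) + 2)⁻¹) with hU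
  have hUball : ∀ k, U k ∈ ball (0:ℂ) 1 := fun k => toDisc_mem_ball (alpha_mem_strip k)
  have hUinv : ∀ k, toStrip (U k) = ((k:ℂ) + 2)⁻¹ := fun k =>
    toStrip_toDisc (alpha_mem_strip k)
  have hUinj : Function.Injective U := by
    intro j k hjk
    have h1 : ((j:ℂ) + 2)⁻¹ = ((k:ℂ) + 2)⁻¹ := by rw [← hUinv j, ← hUinv k, hjk]
    have h2 : (j:ℂ) + 2 = (k:ℂ) + 2 := inv_injective h1
    have h3 : (j:ℂ) = (k:ℂ) := by linear_combination h2
    exact_mod_cast h3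
  have hHzero : ∀ k, H (U k) = 0 := by
    intro k
    have hcast : ((k:ℂ) + 2) = ((k + 2 : ℕ) : ℂ) := by push_cast; ring
    rw [hH]
    simp only
    rw [hUinv k, hcast, heq (k + 2) (by omega), sub_self]
  set w := toDisc z with hw
  have hwball : w ∈ ball (0:ℂ) 1 := toDisc_mem_ball hz
  have hw1 : ‖w‖ < 1 := mem_ball_zero_iff.mp hwball
  have hC0 : 0 ≤ C := le_trans (norm_nonneg _) (hbH w hwball)
  set c := (1 - ‖w‖^2) / 4 with hc
  have hc0 : 0 < c := by
    rw [hc]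
    nlinarith [norm_nonneg w]
  set S : ℕ → ℝ := fun n => ∑ k ∈ Finset.range n, 1 / ((k:ℝ) + 2) with hS
  -- key chain of bounds
  have hchain : ∀ n, ‖H w‖ ≤ C * Real.exp (-(c * S n)) := by
    intro n
    have h1 := iter_bound hdH hbH U hUball hUinj hHzero n w hwball
    have h2 : ∏ k ∈ Finset.range n, ‖Bf (U k) w‖ ≤ Real.exp (-(c * S n)) := by
      calc ∏ k ∈ Finset.range n, ‖Bf (U k) w‖
          ≤ ∏ k ∈ Finset.range n, Real.exp (-((1 - ‖w‖^2) * (1 - ‖U k‖^2) / 8)) := by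
            apply Finset.prod_le_prod (fun _ _ => norm_nonneg _)
            intro k _
            exact Bf_norm_le (mem_ball_zero_iff.mp (hUball k)) hw1
        _ = Real.exp (∑ k ∈ Finset.range n, -((1 - ‖w‖^2) * (1 - ‖U k‖^2) / 8)) := by
            rw [Real.exp_sum]
        _ ≤ Real.exp (-(c * S n)) := by
            apply Real.exp_le_exp.mpr
            have hw2 : (0:ℝ) ≤ 1 - ‖w‖^2 := by nlinarith [hw1, norm_nonneg w]
            have h3 : c * S n ≤ ∑ k ∈ Finset.range n, (1 - ‖w‖^2) * (1 - ‖U k‖^2) / 8 := by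
              rw [hS]
              simp only
              rw [Finset.mul_sum]
              apply Finset.sum_le_sum
              intro k _
              have hest := toDisc_alpha_est k
              calc c * (1 / ((k:ℝ) + 2)) = (1 - ‖w‖^2) * (2 / ((k:ℝ) + 2)) / 8 := by
                    rw [hc]; ring
                _ ≤ (1 - ‖w‖^2) * (1 - ‖U k‖^2) / 8 := by gcongr
            calc ∑ k ∈ Finset.range n, -((1 - ‖w‖^2) * (1 - ‖U k‖^2) / 8)
                = -∑ k ∈ Finset.range n, (1 - ‖w‖^2) * (1 - ‖U k‖^2) / 8 := by
                  rw [← Finset.sum_neg_distrib]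
              _ ≤ -(c * S n) := neg_le_neg h3
    calc ‖H w‖ ≤ C * ∏ k ∈ Finset.range n, ‖Bf (U k) w‖ := h1
      _ ≤ C * Real.exp (-(c * S n)) := mul_le_mul_of_nonneg_left h2 hC0
  have htend : Tendsto (fun n => C * Real.exp (-(c * S n))) atTop (𝓝 0) := by
    have hSt : Tendsto S atTop atTop := harmonic_shift_tendsto
    have hcS : Tendsto (fun n => c * S n) atTop atTop := hSt.const_mul_atTop hc0
    have hneg : Tendsto (fun n => -(c * S n)) atTop atBot := tendsto_neg_atBot_iff.mpr hcS
    have hexp : Tendsto (fun n => Real.exp (-(c * S n))) atTop (𝓝 0) :=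
      Real.tendsto_exp_atBot.comp hneg
    simpa using tendsto_const_nhds.mul hexp
  have hle : ‖H w‖ ≤ 0 := ge_of_tendsto htend (Eventually.of_forall hchain)
  have hHw : H w = 0 := norm_le_zero_iff.mp hle
  have hzz : toStrip w = z := toStrip_toDisc hz
  rw [hH] at hHw
  simp only at hHw
  rw [hzz] at hHw
  exact sub_eq_zero.mp hHw
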